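/- Under the hypotheses of the sampling lemma (|L| ≤ Δ, V finite of size K, T ≥ (2Δ²/ε²)·log(2K/δ) i.i.d. samples), if (S_u, S_v) is an equilibrium (ε = 0) with value V₀, then with probability at least 1 − δ the empirical mixture Ŝ_u satisfies: for all v ∈ V, E_{u~Ŝ_u}[L(u,v)] ≤ V₀ + ε; i.e., the finite uniform mixture of T generators is an ε-approximately optimal min-strategy. -/

import Mathlib

noncomputable def mixExp {α : Type*} (S : α →₀ ℝ) (f : α → ℝ) : ℝ :=
  ∑ a ∈ S.support, S a * f a

def IsMix {α : Type*} (S : α →₀ ℝ) : Prop :=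
  (∀ a, 0 ≤ S a) ∧ ∑ a ∈ S.support, S a = 1

/-- Expectation of `f` under the empirical (uniform) distribution of the samples `us`. -/
noncomputable def empExp {α : Type*} (T : ℕ) (us : Fin T → α) (f : α → ℝ) : ℝ :=
  (∑ i, f (us i)) / T

open Classical in
/-- Probability, under `T` i.i.d. draws from the finitely supported mixed
strategy `S`, that the sample tuple satisfies `P`. -/
noncomputable def iidProb {α : Type*} (S : α →₀ ℝ) (T : ℕ)
    (P : (Fin T → α) → Prop) : ℝ :=
  ∑ us : Fin T → S.support,
    (if P (fun i => (us i : α)) then ∏ i, S (us i) else 0)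

def IsApproxEq {U V : Type*} (L : U → V → ℝ) (Su : U →₀ ℝ) (Sv : V →₀ ℝ)
    (ε V₀ : ℝ) : Prop :=
  (∀ u, V₀ - ε ≤ mixExp Sv (fun v => L u v)) ∧
  (∀ v, mixExp Su (fun u => L u v) ≤ V₀ + ε)

private lemma sum_prod_eq_pow {ι : Type*} [Fintype ι] (f : ι → ℝ) (T : ℕ) :
    ∑ us : Fin T → ι, ∏ i, f (us i) = (∑ a, f a) ^ T := by
  rw [← Fintype.prod_sum (κ := fun _ : Fin T => ι) (f := fun _ a => f a)]
  simp [Finset.prod_const]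

private lemma mgf_bound {ι : Type*} [Fintype ι] (w X : ι → ℝ) (Δ : ℝ)
    (hw : ∀ i, 0 ≤ w i) (hw1 : ∑ i, w i = 1) (hX : ∀ i, X i ^ 2 ≤ Δ ^ 2)
    {t : ℝ} (ht : 0 ≤ t) :
    ∑ i, w i * Real.exp (t * X i) ≤
      Real.exp (t * (∑ i, w i * X i) + t ^ 2 * Δ ^ 2 / 2) := by
  set μ := ∑ i, w i * X i with hμ
  set M : ℝ → ℝ := fun s => ∑ i, w i * Real.exp (s * X i) with hM
  set M1 : ℝ → ℝ := fun s => ∑ i, w i * (Real.exp (s * X i) * X i) with hM1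
  set M2 : ℝ → ℝ := fun s => ∑ i, w i * (Real.exp (s * X i) * X i * X i) with hM2
  have hMpos : ∀ s, 0 < M s := by
    intro s
    obtain ⟨i0, hi0⟩ : ∃ i, 0 < w i := by
      by_contra h
      push_neg at h
      have h0 : ∑ i, w i = 0 := Finset.sum_eq_zero fun i _ => le_antisymm (h i) (hw i)
      rw [hw1] at h0; norm_num at h0
    exact Finset.sum_pos' (fun i _ => mul_nonneg (hw i) (Real.exp_pos _).le)
      ⟨i0, Finset.mem_univ _, mul_pos hi0 (Real.exp_pos _)⟩
  have hdM : ∀ s, HasDerivAt M (M1 s) s := fun s =>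
    HasDerivAt.fun_sum fun i _ => ((hasDerivAt_mul_const (X i)).exp).const_mul (w i)
  have hdM1 : ∀ s, HasDerivAt M1 (M2 s) s := fun s =>
    HasDerivAt.fun_sum fun i _ => (((hasDerivAt_mul_const (X i)).exp).mul_const (X i)).const_mul (w i)
  have hM2le : ∀ s, M2 s ≤ Δ ^ 2 * M s := by
    intro s
    rw [hM2, hM]
    simp only
    rw [Finset.mul_sum]
    refine Finset.sum_le_sum fun i _ => ?_
    calc w i * (Real.exp (s * X i) * X i * X i)
        = X i ^ 2 * (w i * Real.exp (s * X i)) := by ring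
      _ ≤ Δ ^ 2 * (w i * Real.exp (s * X i)) :=
          mul_le_mul_of_nonneg_right (hX i) (mul_nonneg (hw i) (Real.exp_pos _).le)
  set G : ℝ → ℝ := fun s => μ + s * Δ ^ 2 - M1 s / M s with hG
  have hdG : ∀ s, HasDerivAt G (Δ ^ 2 - (M2 s * M s - M1 s * M1 s) / (M s) ^ 2) s := by
    intro s
    have h1 : HasDerivAt (fun s : ℝ => μ + s * Δ ^ 2) (Δ ^ 2) s := by
      simpa using (hasDerivAt_mul_const (Δ ^ 2)).const_add μ
    exact h1.sub ((hdM1 s).div (hdM s) (hMpos s).ne')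
  have hG'nonneg : ∀ s, 0 ≤ Δ ^ 2 - (M2 s * M s - M1 s * M1 s) / (M s) ^ 2 := by
    intro s
    rw [sub_nonneg, div_le_iff₀ (pow_pos (hMpos s) 2)]
    nlinarith [hM2le s, hMpos s, sq_nonneg (M1 s)]
  have hGmono : Monotone G :=
    monotone_of_deriv_nonneg (fun s => (hdG s).differentiableAt)
      (fun s => by rw [(hdG s).deriv]; exact hG'nonneg s)
  have hG0 : G 0 = 0 := by
    simp [hG, hM, hM1, hμ, hw1]
  have hGnn : ∀ s, 0 ≤ s → 0 ≤ G s := fun s hs => hG0 ▸ hGmono hs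
  set g : ℝ → ℝ := fun s => s * μ + s ^ 2 * Δ ^ 2 / 2 - Real.log (M s) with hg
  have hdg : ∀ s, HasDerivAt g (G s) s := by
    intro s
    have h1 : HasDerivAt (fun s : ℝ => s * μ + s ^ 2 * Δ ^ 2 / 2) (μ + s * Δ ^ 2) s := by
      have h2 := (hasDerivAt_mul_const μ).add (((hasDerivAt_pow 2 s).mul_const (Δ ^ 2)).div_const 2)
      exact h2.congr_deriv (by push_cast; ring)
    have h3 : HasDerivAt (fun s => Real.log (M s)) (M1 s / M s) s :=
      (hdM s).log (hMpos s).ne'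
    exact h1.sub h3
  have hgmono : MonotoneOn g (Set.Ici (0:ℝ)) := by
    refine monotoneOn_of_deriv_nonneg (convex_Ici 0)
      (Continuous.continuousOn ?_) (fun s _ => ((hdg s).differentiableAt).differentiableWithinAt)
      (fun s hs => ?_)
    · exact (Differentiable.continuous fun s => (hdg s).differentiableAt)
    · rw [(hdg s).deriv]
      rw [interior_Ici] at hs
      exact hGnn s (le_of_lt hs)
  have hg0 : g 0 = 0 := by
    simp [hg, hM, hw1]
  have hfinal : g 0 ≤ g t := hgmono Set.self_mem_Ici (Set.mem_Ici.2 ht) ht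
  rw [hg0] at hfinal
  have hlog : Real.log (M t) ≤ t * μ + t ^ 2 * Δ ^ 2 / 2 := by
    rw [hg] at hfinal
    simp only at hfinal
    linarith
  calc M t = Real.exp (Real.log (M t)) := (Real.exp_log (hMpos t)).symm
    _ ≤ _ := Real.exp_le_exp.2 hlog

theorem stmt_7 {U V : Type*} [Fintype V]
    (L : U → V → ℝ) (Δ ε δ : ℝ) (K : ℕ) (hK : Fintype.card V = K)
    (hΔ : 0 < Δ) (hε : 0 < ε) (hδ : 0 < δ)
    (hb : ∀ u v, |L u v| ≤ Δ)
    (Su : U →₀ ℝ) (Sv : V →₀ ℝ) (hSu : IsMix Su) (hSv : IsMix Sv)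
    (V₀ : ℝ) (heq : IsApproxEq L Su Sv 0 V₀) (T : ℕ)
    (hT : 2 * Δ ^ 2 / ε ^ 2 * Real.log (2 * K / δ) ≤ (T : ℝ)) :
    1 - δ ≤ iidProb Su T (fun us => ∀ v,
      empExp T us (fun u => L u v) ≤ V₀ + ε) := by
  classical
  have hWnn : ∀ us : Fin T → ↥Su.support, (0:ℝ) ≤ ∏ i, Su ((us i : U)) :=
    fun us => Finset.prod_nonneg fun i _ => hSu.1 _
  have htotal : ∑ us : Fin T → ↥Su.support, ∏ i, Su ((us i : U)) = 1 := by
    rw [sum_prod_eq_pow (fun a : ↥Su.support => Su (a : U)) T]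
    rw [Finset.sum_coe_sort Su.support (fun a => Su a), hSu.2, one_pow]
  by_cases hδ1 : 1 ≤ δ
  · have h0 : (0:ℝ) ≤ iidProb Su T (fun us => ∀ v,
        empExp T us (fun u => L u v) ≤ V₀ + ε) := by
      unfold iidProb
      refine Finset.sum_nonneg fun us _ => ?_
      split
      · exact hWnn us
      · exact le_refl 0
    linarith
  push_neg at hδ1
  -- split the probability
  have hsplit : iidProb Su T (fun us => ∀ v, empExp T us (fun u => L u v) ≤ V₀ + ε) =
      1 - ∑ us : Fin T → ↥Su.support,
        (if ¬ (∀ v, empExp T (fun i => (us i : U)) (fun u => L u v) ≤ V₀ + ε)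
          then ∏ i, Su ((us i : U)) else 0) := by
    rw [eq_sub_iff_add_eq, ← htotal]
    unfold iidProb
    rw [← Finset.sum_add_distrib]
    refine Finset.sum_congr rfl fun us _ => ?_
    by_cases h : ∀ v, empExp T (fun i => (us i : U)) (fun u => L u v) ≤ V₀ + ε <;> simp [h]
  have hitenn : ∀ (p : Prop) [Decidable p] (x : ℝ), 0 ≤ x → (0:ℝ) ≤ if p then x else 0 := by
    intro p _ x hx
    split
    · exact hx
    · exact le_refl 0
  -- union bound
  have hunion : ∑ us : Fin T → ↥Su.support,
        (if ¬ (∀ v, empExp T (fun i => (us i : U)) (fun u => L u v) ≤ V₀ + ε)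
          then ∏ i, Su ((us i : U)) else 0)
      ≤ ∑ v : V, ∑ us : Fin T → ↥Su.support,
        (if ¬ (empExp T (fun i => (us i : U)) (fun u => L u v) ≤ V₀ + ε)
          then ∏ i, Su ((us i : U)) else 0) := by
    rw [Finset.sum_comm]
    refine Finset.sum_le_sum fun us _ => ?_
    by_cases h : ∀ v, empExp T (fun i => (us i : U)) (fun u => L u v) ≤ V₀ + ε
    · rw [if_neg (not_not_intro h)]
      exact Finset.sum_nonneg fun v _ => hitenn _ _ (hWnn us)
    · rw [if_pos h]
      push_neg at h
      obtain ⟨v0, hv0⟩ := h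
      refine le_trans ?_ (Finset.single_le_sum
        (f := fun v => if ¬ (empExp T (fun i => (us i : U)) (fun u => L u v) ≤ V₀ + ε)
          then ∏ i, Su ((us i : U)) else 0)
        (fun v _ => hitenn _ _ (hWnn us)) (Finset.mem_univ v0))
      show (∏ i, Su ((us i : U))) ≤ if ¬ (empExp T (fun i => (us i : U)) (fun u => L u v0) ≤ V₀ + ε)
        then ∏ i, Su ((us i : U)) else 0
      rw [if_pos (not_le.2 hv0)]
  -- per-v Chernoff bound
  have hperv : ∀ v : V, (∑ us : Fin T → ↥Su.support,
      (if ¬ (empExp T (fun i => (us i : U)) (fun u => L u v) ≤ V₀ + ε)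
        then ∏ i, Su ((us i : U)) else 0)) ≤ δ / (2 * K) := by
    intro v
    haveI : Nonempty V := ⟨v⟩
    have hK1 : 1 ≤ K := hK ▸ Fintype.card_pos
    have hKR : (1:ℝ) ≤ (K:ℝ) := by exact_mod_cast hK1
    have hratio : (1:ℝ) < 2 * K / δ := by
      rw [lt_div_iff₀ hδ]; linarith
    have hlogpos : 0 < Real.log (2 * K / δ) := Real.log_pos hratio
    have hTpos : (0:ℝ) < T := lt_of_lt_of_le (by positivity) hT
    set t := ε / Δ ^ 2 with htdef
    have htpos : 0 < t := by positivity
    set c := V₀ + ε with hc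
    -- pointwise Chernoff step
    have hstep1 : ∀ us : Fin T → ↥Su.support,
        (if ¬ (empExp T (fun i => (us i : U)) (fun u => L u v) ≤ V₀ + ε)
          then ∏ i, Su ((us i : U)) else 0)
        ≤ ∏ i, (Su ((us i : U)) * Real.exp (t * (L (us i : U) v - c))) := by
      intro us
      by_cases h : empExp T (fun i => (us i : U)) (fun u => L u v) ≤ V₀ + ε
      · rw [if_neg (not_not_intro h)]
        exact Finset.prod_nonneg fun i _ => mul_nonneg (hSu.1 _) (Real.exp_pos _).le
      · rw [if_pos h]
        have hlt : c < (∑ i, L (us i : U) v) / T := by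
          rw [hc]; exact not_le.1 h
        have hsum0 : (0:ℝ) ≤ ∑ i, t * (L (us i : U) v - c) := by
          have h2 : c * T < ∑ i, L (us i : U) v := by
            rwa [lt_div_iff₀ hTpos] at hlt
          have h3 : ∑ i, (L (us i : U) v - c) = (∑ i, L (us i : U) v) - T * c := by
            rw [Finset.sum_sub_distrib, Finset.sum_const, Finset.card_univ, Fintype.card_fin,
              nsmul_eq_mul]
          rw [← Finset.mul_sum, h3]
          nlinarith
        calc ∏ i, Su ((us i : U))
            = (∏ i, Su ((us i : U))) * 1 := (mul_one _).symm
          _ ≤ (∏ i, Su ((us i : U))) * Real.exp (∑ i, t * (L (us i : U) v - c)) :=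
              mul_le_mul_of_nonneg_left (Real.one_le_exp hsum0) (hWnn us)
          _ = ∏ i, (Su ((us i : U)) * Real.exp (t * (L (us i : U) v - c))) := by
              rw [Real.exp_sum, ← Finset.prod_mul_distrib]
    set A := ∑ a : ↥Su.support, Su (a : U) * Real.exp (t * (L (a : U) v - c)) with hAdef
    have hAnn : 0 ≤ A :=
      Finset.sum_nonneg fun a _ => mul_nonneg (hSu.1 _) (Real.exp_pos _).le
    have hstep2 : ∑ us : Fin T → ↥Su.support,
        ∏ i, (Su ((us i : U)) * Real.exp (t * (L (us i : U) v - c))) = A ^ T :=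
      sum_prod_eq_pow (fun a : ↥Su.support => Su (a : U) * Real.exp (t * (L (a : U) v - c))) T
    -- mgf bound
    have hμle : (∑ a : ↥Su.support, Su (a : U) * L (a : U) v) ≤ V₀ := by
      have h4 := heq.2 v
      unfold mixExp at h4
      rw [Finset.sum_coe_sort Su.support (fun a => Su a * L a v)]
      linarith
    have hmgf := mgf_bound (fun a : ↥Su.support => Su (a : U))
      (fun a : ↥Su.support => L (a : U) v) Δ
      (fun a => hSu.1 _)
      (by rw [Finset.sum_coe_sort Su.support (fun a => Su a)]; exact hSu.2)
      (fun a => by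
        have := abs_le.1 (hb (a : U) v)
        nlinarith [this.1, this.2])
      htpos.le
    have hA : A = Real.exp (-(t * c)) * ∑ a : ↥Su.support, Su (a : U) * Real.exp (t * L (a : U) v) := by
      rw [hAdef, Finset.mul_sum]
      refine Finset.sum_congr rfl fun a _ => ?_
      rw [mul_sub, sub_eq_add_neg, Real.exp_add]
      ring
    have hAle : A ≤ Real.exp (-(ε ^ 2 / (2 * Δ ^ 2))) := by
      rw [hA]
      calc Real.exp (-(t * c)) * ∑ a : ↥Su.support, Su (a : U) * Real.exp (t * L (a : U) v)
          ≤ Real.exp (-(t * c)) *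
            Real.exp (t * (∑ a : ↥Su.support, Su (a : U) * L (a : U) v) + t ^ 2 * Δ ^ 2 / 2) :=
            mul_le_mul_of_nonneg_left hmgf (Real.exp_pos _).le
        _ = Real.exp (-(t * c) + (t * (∑ a : ↥Su.support, Su (a : U) * L (a : U) v)
              + t ^ 2 * Δ ^ 2 / 2)) := (Real.exp_add _ _).symm
        _ ≤ Real.exp (-(ε ^ 2 / (2 * Δ ^ 2))) := by
            apply Real.exp_le_exp.2
            have e1 : t * ε = ε ^ 2 / Δ ^ 2 := by
              rw [htdef]; field_simp
            have e2 : t ^ 2 * Δ ^ 2 / 2 = ε ^ 2 / (2 * Δ ^ 2) := by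
              rw [htdef]; field_simp
            have h5 : t * (∑ a : ↥Su.support, Su (a : U) * L (a : U) v) ≤ t * V₀ :=
              mul_le_mul_of_nonneg_left hμle htpos.le
            have hcc : c = V₀ + ε := hc
            have e3 : -(t * c) = -(t * V₀) - t * ε := by rw [hcc]; ring
            have hx : ε ^ 2 / Δ ^ 2 - ε ^ 2 / (2 * Δ ^ 2) = ε ^ 2 / (2 * Δ ^ 2) := by
              field_simp; ring
            linarith
    have hpow : A ^ T ≤ Real.exp (-(ε ^ 2 / (2 * Δ ^ 2))) ^ T := pow_le_pow_left₀ hAnn hAle T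
    have hexpT : Real.exp (-(ε ^ 2 / (2 * Δ ^ 2))) ^ T
        = Real.exp (-((T:ℝ) * (ε ^ 2 / (2 * Δ ^ 2)))) := by
      rw [← Real.exp_nat_mul]
      ring_nf
    have hfin : Real.exp (-((T:ℝ) * (ε ^ 2 / (2 * Δ ^ 2)))) ≤ δ / (2 * K) := by
      have h6 : Real.log (2 * K / δ) ≤ (T:ℝ) * (ε ^ 2 / (2 * Δ ^ 2)) := by
        have h7 : Real.log (2 * K / δ)
            = (2 * Δ ^ 2 / ε ^ 2 * Real.log (2 * K / δ)) * (ε ^ 2 / (2 * Δ ^ 2)) := by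
          field_simp
        rw [h7]
        exact mul_le_mul_of_nonneg_right hT (by positivity)
      calc Real.exp (-((T:ℝ) * (ε ^ 2 / (2 * Δ ^ 2))))
          ≤ Real.exp (-(Real.log (2 * K / δ))) := Real.exp_le_exp.2 (neg_le_neg h6)
        _ = δ / (2 * K) := by
            rw [Real.exp_neg, Real.exp_log (by positivity), inv_div]
    calc (∑ us : Fin T → ↥Su.support,
        (if ¬ (empExp T (fun i => (us i : U)) (fun u => L u v) ≤ V₀ + ε)
          then ∏ i, Su ((us i : U)) else 0))
        ≤ ∑ us : Fin T → ↥Su.support,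
          ∏ i, (Su ((us i : U)) * Real.exp (t * (L (us i : U) v - c))) :=
          Finset.sum_le_sum fun us _ => hstep1 us
      _ = A ^ T := hstep2
      _ ≤ Real.exp (-(ε ^ 2 / (2 * Δ ^ 2))) ^ T := hpow
      _ = Real.exp (-((T:ℝ) * (ε ^ 2 / (2 * Δ ^ 2)))) := hexpT
      _ ≤ δ / (2 * K) := hfin
  have hsumv : ∑ _v : V, δ / (2 * K) ≤ δ := by
    rw [Finset.sum_const, Finset.card_univ, hK, nsmul_eq_mul]
    rcases eq_or_ne (K:ℝ) 0 with h0 | h0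
    · rw [h0]; simp; positivity
    · have : (K:ℝ) * (δ / (2 * K)) = δ / 2 := by field_simp
      rw [this]; linarith
  have hbad := le_trans hunion (le_trans (Finset.sum_le_sum fun v _ => hperv v) hsumv)
  rw [hsplit]
  linarith
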